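/- arXiv:0905.0044 — 2 statements merged into one kernel-verified Lean document; each statement's English description precedes it below -/
import Mathlib

section
/- If P is an orthogonal projection on ℂ^{m×n} that commutes with P_Ψ, where Ψ is a set of at most r rank-one matrices, then for all X ∈ ℂ^{m×n}, (1 − δ_r(A)) ‖P P_Ψ X‖_F ≤ ‖P P_Ψ A* A P P_Ψ X‖_F. -/
open scoped BigOperators Matrix

/-- Frobenius (trace) inner product on complex matrices: `⟪X, Y⟫ = tr(Yᴴ X)`. -/
noncomputable def frobInner {m n : ℕ} (X Y : Matrix (Fin m) (Fin n) ℂ) : ℂ :=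
  (Yᴴ * X).trace

/-- Frobenius norm of a complex matrix. -/
noncomputable def frobNorm {m n : ℕ} (X : Matrix (Fin m) (Fin n) ℂ) : ℝ :=
  Real.sqrt (∑ i, ∑ j, ‖X i j‖ ^ 2)

/-- Euclidean norm on `ℂ^p`. -/
noncomputable def eNorm {p : ℕ} (v : Fin p → ℂ) : ℝ :=
  Real.sqrt (∑ k, ‖v k‖ ^ 2)

/-- Hermitian inner product on `ℂ^p` (linear in the first argument). -/
noncomputable def eInner {p : ℕ} (u v : Fin p → ℂ) : ℂ :=
  ∑ k, (starRingEnd ℂ) (v k) * u k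

/-- `A` satisfies the rank-`r` restricted isometry inequalities with constant `δ`:
`(1-δ)‖X‖_F² ≤ ‖A X‖₂² ≤ (1+δ)‖X‖_F²` for all `X` with `rank X ≤ r`. -/
def RIPwith {m n p : ℕ} (A : Matrix (Fin m) (Fin n) ℂ →ₗ[ℂ] (Fin p → ℂ)) (r : ℕ) (δ : ℝ) : Prop :=
  ∀ X : Matrix (Fin m) (Fin n) ℂ, X.rank ≤ r →
    (1 - δ) * frobNorm X ^ 2 ≤ eNorm (A X) ^ 2 ∧ eNorm (A X) ^ 2 ≤ (1 + δ) * frobNorm X ^ 2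

/-- `P` is the orthogonal projection onto the span of `S`
with respect to the Frobenius inner product. -/
def IsOrthProjOn {m n : ℕ} (P : Matrix (Fin m) (Fin n) ℂ →ₗ[ℂ] Matrix (Fin m) (Fin n) ℂ)
    (S : Set (Matrix (Fin m) (Fin n) ℂ)) : Prop :=
  (∀ X, P (P X) = P X) ∧ LinearMap.range P = Submodule.span ℂ S ∧
    (∀ X Y, frobInner (P X) Y = frobInner X (P Y))

/-- `B` is the adjoint of `A` w.r.t. the Frobenius and Euclidean inner products. -/
def IsAdjoint {m n p : ℕ} (A : Matrix (Fin m) (Fin n) ℂ →ₗ[ℂ] (Fin p → ℂ))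
    (B : (Fin p → ℂ) →ₗ[ℂ] Matrix (Fin m) (Fin n) ℂ) : Prop :=
  ∀ X v, eInner (A X) v = frobInner X (B v)

/-! ### Auxiliary lemmas -/

noncomputable def toE {m n : ℕ} (X : Matrix (Fin m) (Fin n) ℂ) :
    EuclideanSpace ℂ (Fin m × Fin n) := WithLp.toLp 2 (fun ij : Fin m × Fin n => X ij.1 ij.2)

noncomputable def toV {p : ℕ} (v : Fin p → ℂ) : EuclideanSpace ℂ (Fin p) := WithLp.toLp 2 v

lemma frobInner_eq {m n : ℕ} (X Y : Matrix (Fin m) (Fin n) ℂ) :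
    frobInner X Y = inner ℂ (toE Y) (toE X) := by
  simp only [frobInner, Matrix.trace, Matrix.diag, Matrix.mul_apply,
    Matrix.conjTranspose_apply, PiLp.inner_apply, toE, RCLike.inner_apply]
  rw [Fintype.sum_prod_type]
  exact Finset.sum_comm.trans (Finset.sum_congr rfl fun _ _ => Finset.sum_congr rfl fun _ _ => mul_comm _ _)

lemma frobNorm_eq {m n : ℕ} (X : Matrix (Fin m) (Fin n) ℂ) :
    frobNorm X = ‖toE X‖ := by
  rw [EuclideanSpace.norm_eq, frobNorm, Fintype.sum_prod_type]
  simp [toE]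

lemma eInner_eq {p : ℕ} (u v : Fin p → ℂ) : eInner u v = inner ℂ (toV v) (toV u) := by
  simp [eInner, PiLp.inner_apply, toV, RCLike.inner_apply]
  exact Finset.sum_congr rfl fun _ _ => mul_comm _ _

lemma eNorm_eq {p : ℕ} (v : Fin p → ℂ) : eNorm v = ‖toV v‖ := by
  rw [EuclideanSpace.norm_eq]; rfl

lemma matRank_add_le {m n : ℕ} (A B : Matrix (Fin m) (Fin n) ℂ) :
    (A + B).rank ≤ A.rank + B.rank := by
  have h : LinearMap.range (A + B).mulVecLin ≤
      LinearMap.range A.mulVecLin ⊔ LinearMap.range B.mulVecLin := by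
    rintro _ ⟨v, rfl⟩
    have : (A + B).mulVecLin v = A.mulVecLin v + B.mulVecLin v := by
      simp [Matrix.mulVecLin_apply, Matrix.add_mulVec]
    rw [this]
    exact Submodule.add_mem_sup ⟨v, rfl⟩ ⟨v, rfl⟩
  calc (A + B).rank ≤ Module.finrank ℂ
        ↥(LinearMap.range A.mulVecLin ⊔ LinearMap.range B.mulVecLin) :=
        Submodule.finrank_mono h
    _ ≤ A.rank + B.rank := by
        have := Submodule.finrank_sup_add_finrank_inf_eq
          (LinearMap.range A.mulVecLin) (LinearMap.range B.mulVecLin)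
        unfold Matrix.rank
        omega

lemma matRank_smul_le {m n : ℕ} (c : ℂ) (A : Matrix (Fin m) (Fin n) ℂ) :
    (c • A).rank ≤ A.rank := by
  have h : LinearMap.range (c • A).mulVecLin ≤ LinearMap.range A.mulVecLin := by
    rintro _ ⟨v, rfl⟩
    exact ⟨c • v, by simp [Matrix.mulVecLin_apply, Matrix.smul_mulVec, Matrix.mulVec_smul]⟩
  exact Submodule.finrank_mono h

lemma matRank_sum_le {m n : ℕ} {ι : Type*} (s : Finset ι) (g : ι → Matrix (Fin m) (Fin n) ℂ) :
    (∑ i ∈ s, g i).rank ≤ ∑ i ∈ s, (g i).rank := by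
  classical
  induction s using Finset.induction_on with
  | empty => simp [Matrix.rank_zero]
  | insert _ _ hi ih =>
    rw [Finset.sum_insert hi, Finset.sum_insert hi]
    exact (matRank_add_le _ _).trans (add_le_add_right ih _)

lemma rank_of_mem_span {m n : ℕ} (Ψ : Finset (Matrix (Fin m) (Fin n) ℂ))
    (hΨ : ∀ ψ ∈ Ψ, ψ.rank = 1) {Y : Matrix (Fin m) (Fin n) ℂ}
    (hY : Y ∈ Submodule.span ℂ (Ψ : Set (Matrix (Fin m) (Fin n) ℂ))) :
    Y.rank ≤ Ψ.card := by
  obtain ⟨f, -, hf⟩ := Submodule.mem_span_finset.mp hY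
  calc Y.rank = (∑ ψ ∈ Ψ, f ψ • ψ).rank := by rw [hf]
    _ ≤ ∑ ψ ∈ Ψ, (f ψ • ψ).rank := matRank_sum_le _ _
    _ ≤ ∑ ψ ∈ Ψ, 1 := Finset.sum_le_sum fun ψ hψ => (matRank_smul_le _ _).trans_eq (hΨ ψ hψ)
    _ = Ψ.card := by simp

/-- If `Q` is an orthogonal projection commuting with `P_Ψ`, then
`(1 − δ_r(A)) ‖Q P_Ψ X‖_F ≤ ‖Q P_Ψ A* A Q P_Ψ X‖_F`. -/
theorem proj_commute_lower_bound {m n p r : ℕ}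
    (A : Matrix (Fin m) (Fin n) ℂ →ₗ[ℂ] (Fin p → ℂ))
    (δ : ℝ) (hδ0 : 0 ≤ δ) (hA : RIPwith A r δ)
    (Astar : (Fin p → ℂ) →ₗ[ℂ] Matrix (Fin m) (Fin n) ℂ) (hadj : IsAdjoint A Astar)
    (Ψ : Finset (Matrix (Fin m) (Fin n) ℂ)) (hΨ : ∀ ψ ∈ Ψ, ψ.rank = 1) (hcard : Ψ.card ≤ r)
    (P : Matrix (Fin m) (Fin n) ℂ →ₗ[ℂ] Matrix (Fin m) (Fin n) ℂ)
    (hP : IsOrthProjOn P (Ψ : Set (Matrix (Fin m) (Fin n) ℂ)))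
    (Q : Matrix (Fin m) (Fin n) ℂ →ₗ[ℂ] Matrix (Fin m) (Fin n) ℂ)
    (hQidem : ∀ X, Q (Q X) = Q X)
    (hQsa : ∀ X Y, frobInner (Q X) Y = frobInner X (Q Y))
    (hcomm : ∀ X, Q (P X) = P (Q X)) :
    ∀ X : Matrix (Fin m) (Fin n) ℂ,
      (1 - δ) * frobNorm (Q (P X)) ≤ frobNorm (Q (P (Astar (A (Q (P X)))))) := by
  intro X
  obtain ⟨hPidem, hPrange, hPsa⟩ := hP
  set U := Q (P X) with hU
  set Z := Q (P (Astar (A U))) with hZ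
  -- Q (P U) = U
  have hQPU : Q (P U) = U := by
    rw [hU, ← hcomm (P X), hQidem, hPidem]
  -- adjoint twist
  have htwist : ∀ W, frobInner U W = frobInner U (Q (P W)) := by
    intro W
    conv_lhs => rw [← hQPU]
    rw [hQsa, hPsa, ← hcomm]
  -- rank bound
  have hUrank : U.rank ≤ r := by
    have hmem : U ∈ Submodule.span ℂ (Ψ : Set (Matrix (Fin m) (Fin n) ℂ)) := by
      rw [← hPrange]
      exact ⟨Q X, (hcomm X).symm⟩
    exact (rank_of_mem_span Ψ hΨ hmem).trans hcard
  -- RIP lower bound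
  have hrip := (hA U hUrank).1
  -- norm of A U squared equals re of frobInner U Z
  have hAE : eNorm (A U) ^ 2 = (frobInner U Z).re := by
    have h1 : eInner (A U) (A U) = frobInner U (Astar (A U)) := hadj U (A U)
    have h2 : frobInner U (Astar (A U)) = frobInner U Z := htwist (Astar (A U))
    rw [← h2, ← h1, eInner_eq, eNorm_eq, ← @inner_self_eq_norm_sq ℂ]
    rfl
  -- Cauchy-Schwarz
  have hcs : (frobInner U Z).re ≤ frobNorm Z * frobNorm U := by
    calc (frobInner U Z).re ≤ ‖frobInner U Z‖ := Complex.re_le_norm _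
      _ = ‖(inner ℂ (toE Z) (toE U) : ℂ)‖ := by rw [frobInner_eq]
      _ ≤ ‖toE Z‖ * ‖toE U‖ := norm_inner_le_norm _ _
      _ = frobNorm Z * frobNorm U := by rw [frobNorm_eq, frobNorm_eq]
  have key : (1 - δ) * frobNorm U ^ 2 ≤ frobNorm Z * frobNorm U :=
    hrip.trans (hAE ▸ hcs)
  have hU0 : 0 ≤ frobNorm U := Real.sqrt_nonneg _
  have hZ0 : 0 ≤ frobNorm Z := Real.sqrt_nonneg _
  rcases eq_or_lt_of_le hU0 with h | h
  · rw [← h]; simpa using hZ0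
  · nlinarith [key, h]
end

section
/- Suppose Ψ and Υ are sets of rank-one atoms such that P_Υ^⊥ P_Ψ = P_Ψ P_Υ^⊥, |Ψ| ≤ r, and X ∈ ℂ^{m×n} satisfies P_Υ^⊥ X = 0. Then ‖P_Υ^⊥ P_Ψ A* A P_Ψ X‖_F ≤ √2 · δ_r(A) · ‖P_Ψ X‖_F. -/
open scoped BigOperators Matrix

section Aux
variable {m n p : ℕ}

lemma conj_mul_self (z : ℂ) : (starRingEnd ℂ) z * z = ((‖z‖ ^ 2 : ℝ) : ℂ) := by
  rw [mul_comm, Complex.mul_conj, Complex.normSq_eq_norm_sq]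

lemma frobInner_expand (X Y : Matrix (Fin m) (Fin n) ℂ) :
    frobInner X Y = ∑ j, ∑ i, (starRingEnd ℂ) (Y i j) * X i j := by
  rw [frobInner, Matrix.trace]
  refine Finset.sum_congr rfl fun j _ => ?_
  rw [Matrix.diag_apply, Matrix.mul_apply]
  exact Finset.sum_congr rfl fun i _ => by rw [Matrix.conjTranspose_apply, starRingEnd_apply]

lemma frobNorm_sq (X : Matrix (Fin m) (Fin n) ℂ) :
    frobNorm X ^ 2 = ∑ i, ∑ j, ‖X i j‖ ^ 2 := by
  have h : (0:ℝ) ≤ ∑ i, ∑ j, ‖X i j‖ ^ 2 := by positivity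
  rw [frobNorm, Real.sq_sqrt h]

lemma frobNorm_nonneg (X : Matrix (Fin m) (Fin n) ℂ) : 0 ≤ frobNorm X :=
  Real.sqrt_nonneg _

lemma frobInner_self (X : Matrix (Fin m) (Fin n) ℂ) :
    frobInner X X = ((frobNorm X ^ 2 : ℝ) : ℂ) := by
  rw [frobInner_expand, frobNorm_sq, Finset.sum_comm]
  push_cast
  refine Finset.sum_congr rfl fun i _ => Finset.sum_congr rfl fun j _ => ?_
  rw [conj_mul_self]
  push_cast
  ring

lemma frobInner_sub_left (X Y Z : Matrix (Fin m) (Fin n) ℂ) :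
    frobInner (X - Y) Z = frobInner X Z - frobInner Y Z := by
  simp [frobInner, Matrix.mul_sub]

lemma frobInner_sub_right (X Y Z : Matrix (Fin m) (Fin n) ℂ) :
    frobInner X (Y - Z) = frobInner X Y - frobInner X Z := by
  simp [frobInner, Matrix.sub_mul]

lemma frobInner_add_left (X Y Z : Matrix (Fin m) (Fin n) ℂ) :
    frobInner (X + Y) Z = frobInner X Z + frobInner Y Z := by
  simp [frobInner, Matrix.mul_add]

lemma frobInner_add_right (X Y Z : Matrix (Fin m) (Fin n) ℂ) :
    frobInner X (Y + Z) = frobInner X Y + frobInner X Z := by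
  simp [frobInner, Matrix.add_mul]

lemma frobInner_zero_right (X : Matrix (Fin m) (Fin n) ℂ) :
    frobInner X (0 : Matrix (Fin m) (Fin n) ℂ) = 0 := by
  simp [frobInner]

lemma frobInner_smul_left (c : ℂ) (X Y : Matrix (Fin m) (Fin n) ℂ) :
    frobInner (c • X) Y = c * frobInner X Y := by
  simp [frobInner, Matrix.mul_smul]

lemma frobInner_smul_right (c : ℂ) (X Y : Matrix (Fin m) (Fin n) ℂ) :
    frobInner X (c • Y) = (starRingEnd ℂ) c * frobInner X Y := by
  rw [frobInner, frobInner, Matrix.conjTranspose_smul, Matrix.smul_mul, Matrix.trace_smul,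
    smul_eq_mul, starRingEnd_apply]

lemma frobInner_conj (X Y : Matrix (Fin m) (Fin n) ℂ) :
    frobInner Y X = (starRingEnd ℂ) (frobInner X Y) := by
  rw [frobInner_expand, frobInner_expand, map_sum]
  refine Finset.sum_congr rfl fun j _ => ?_
  rw [map_sum]
  refine Finset.sum_congr rfl fun i _ => ?_
  rw [map_mul, Complex.conj_conj, mul_comm]

lemma frobNorm_smul (c : ℂ) (X : Matrix (Fin m) (Fin n) ℂ) :
    frobNorm (c • X) = ‖c‖ * frobNorm X := by
  have h1 : (∑ i, ∑ j, ‖(c • X) i j‖ ^ 2) = ‖c‖ ^ 2 * ∑ i, ∑ j, ‖X i j‖ ^ 2 := by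
    rw [Finset.mul_sum]
    refine Finset.sum_congr rfl fun i _ => ?_
    rw [Finset.mul_sum]
    refine Finset.sum_congr rfl fun j _ => ?_
    rw [Matrix.smul_apply, smul_eq_mul, norm_mul, mul_pow]
  rw [frobNorm, frobNorm, h1, Real.sqrt_mul (sq_nonneg _), Real.sqrt_sq (norm_nonneg c)]

lemma frobNorm_eq_zero {X : Matrix (Fin m) (Fin n) ℂ} (h : frobNorm X = 0) : X = 0 := by
  have hsum : (∑ i, ∑ j, ‖X i j‖ ^ 2) = 0 := by
    have h2 := frobNorm_sq X
    rw [h] at h2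
    linarith
  ext i j
  have h1 : ∀ i₀ ∈ (Finset.univ : Finset (Fin m)), (0:ℝ) ≤ ∑ j, ‖X i₀ j‖ ^ 2 :=
    fun _ _ => Finset.sum_nonneg fun _ _ => sq_nonneg _
  have h2 := (Finset.sum_eq_zero_iff_of_nonneg h1).mp hsum i (Finset.mem_univ i)
  have h3 : ∀ j₀ ∈ (Finset.univ : Finset (Fin n)), (0:ℝ) ≤ ‖X i j₀‖ ^ 2 :=
    fun _ _ => sq_nonneg _
  have h4 := (Finset.sum_eq_zero_iff_of_nonneg h3).mp h2 j (Finset.mem_univ j)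
  have h5 : ‖X i j‖ = 0 := by nlinarith [norm_nonneg (X i j)]
  simpa using norm_eq_zero.mp h5

lemma eNorm_sq (v : Fin p → ℂ) : eNorm v ^ 2 = ∑ k, ‖v k‖ ^ 2 := by
  have h : (0:ℝ) ≤ ∑ k, ‖v k‖ ^ 2 := by positivity
  rw [eNorm, Real.sq_sqrt h]

lemma eInner_self (v : Fin p → ℂ) : eInner v v = ((eNorm v ^ 2 : ℝ) : ℂ) := by
  rw [eInner, eNorm_sq]
  push_cast
  refine Finset.sum_congr rfl fun k _ => ?_
  rw [conj_mul_self]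
  push_cast
  ring

lemma eInner_conj (u v : Fin p → ℂ) : eInner v u = (starRingEnd ℂ) (eInner u v) := by
  rw [eInner, eInner, map_sum]
  refine Finset.sum_congr rfl fun k _ => ?_
  rw [map_mul, Complex.conj_conj, mul_comm]

lemma eInner_smul_left (c : ℂ) (u v : Fin p → ℂ) :
    eInner (c • u) v = c * eInner u v := by
  rw [eInner, eInner, Finset.mul_sum]
  refine Finset.sum_congr rfl fun k _ => ?_
  rw [Pi.smul_apply, smul_eq_mul]
  ring

lemma eInner_smul_right (c : ℂ) (u v : Fin p → ℂ) :
    eInner u (c • v) = (starRingEnd ℂ) c * eInner u v := by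
  rw [eInner, eInner, Finset.mul_sum]
  refine Finset.sum_congr rfl fun k _ => ?_
  rw [Pi.smul_apply, smul_eq_mul, map_mul]
  ring

lemma eInner_add_add (u v : Fin p → ℂ) :
    eInner (u + v) (u + v) = eInner u u + eInner v v + (eInner u v + eInner v u) := by
  simp only [eInner, Pi.add_apply, map_add, add_mul, mul_add, Finset.sum_add_distrib]
  ring

lemma eNorm_sq_expand (u v : Fin p → ℂ) :
    eNorm (u + v) ^ 2 = eNorm u ^ 2 + eNorm v ^ 2 + 2 * (eInner u v).re := by
  have h := congrArg Complex.re (eInner_add_add u v)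
  rw [eInner_self, eInner_self, eInner_self, eInner_conj u v] at h
  simp only [Complex.ofReal_re, Complex.add_re, Complex.conj_re] at h
  linarith

end Aux

section Aux2
variable {m n p : ℕ}

lemma eInner_neg_right (u v : Fin p → ℂ) : eInner u (-v) = - eInner u v := by
  simp [eInner]

lemma eInner_zero_right (u : Fin p → ℂ) : eInner u (0 : Fin p → ℂ) = 0 := by
  simp [eInner]

lemma eNorm_neg (v : Fin p → ℂ) : eNorm (-v) = eNorm v := by
  simp [eNorm]

lemma eNorm_sq_expand_sub (u v : Fin p → ℂ) :
    eNorm (u - v) ^ 2 = eNorm u ^ 2 + eNorm v ^ 2 - 2 * (eInner u v).re := by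
  rw [sub_eq_add_neg, eNorm_sq_expand, eInner_neg_right, eNorm_neg]
  simp only [Complex.neg_re]
  ring

lemma frobInner_add_add (U V : Matrix (Fin m) (Fin n) ℂ) :
    frobInner (U + V) (U + V)
      = frobInner U U + frobInner V V + (frobInner U V + frobInner V U) := by
  rw [frobInner_add_left, frobInner_add_right, frobInner_add_right]
  ring

lemma frobNorm_sq_expand (U V : Matrix (Fin m) (Fin n) ℂ) :
    frobNorm (U + V) ^ 2 = frobNorm U ^ 2 + frobNorm V ^ 2 + 2 * (frobInner U V).re := by
  have h := congrArg Complex.re (frobInner_add_add U V)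
  rw [frobInner_self, frobInner_self, frobInner_self, frobInner_conj U V] at h
  simp only [Complex.ofReal_re, Complex.add_re, Complex.conj_re] at h
  linarith

lemma frobInner_neg_right (X Y : Matrix (Fin m) (Fin n) ℂ) :
    frobInner X (-Y) = - frobInner X Y := by
  have h := frobInner_smul_right (-1 : ℂ) X Y
  simpa using h

lemma frobNorm_neg (X : Matrix (Fin m) (Fin n) ℂ) : frobNorm (-X) = frobNorm X := by
  simp [frobNorm]

lemma frobNorm_sq_expand_sub (U V : Matrix (Fin m) (Fin n) ℂ) :
    frobNorm (U - V) ^ 2 = frobNorm U ^ 2 + frobNorm V ^ 2 - 2 * (frobInner U V).re := by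
  rw [sub_eq_add_neg, frobNorm_sq_expand, frobInner_neg_right, frobNorm_neg]
  simp only [Complex.neg_re]
  ring

lemma matrix_rank_add_le (A B : Matrix (Fin m) (Fin n) ℂ) :
    (A + B).rank ≤ A.rank + B.rank := by
  rw [Matrix.rank, Matrix.rank, Matrix.rank]
  have h : LinearMap.range (A + B).mulVecLin ≤
      LinearMap.range A.mulVecLin ⊔ LinearMap.range B.mulVecLin := by
    rintro x ⟨y, rfl⟩
    rw [Matrix.mulVecLin_add, LinearMap.add_apply]
    exact Submodule.add_mem_sup (LinearMap.mem_range_self _ y) (LinearMap.mem_range_self _ y)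
  exact (Submodule.finrank_mono h).trans (Submodule.finrank_add_le_finrank_add_finrank _ _)

lemma matrix_rank_smul_le (c : ℂ) (A : Matrix (Fin m) (Fin n) ℂ) :
    (c • A).rank ≤ A.rank := by
  rw [Matrix.rank, Matrix.rank]
  have h : LinearMap.range (c • A).mulVecLin ≤ LinearMap.range A.mulVecLin := by
    rintro x ⟨y, rfl⟩
    refine ⟨c • y, ?_⟩
    rw [map_smul, Matrix.mulVecLin_apply, Matrix.mulVecLin_apply, ← Matrix.smul_mulVec]
  exact Submodule.finrank_mono h

lemma matrix_rank_sum_le {α : Type*} (s : Finset α) (g : α → Matrix (Fin m) (Fin n) ℂ) :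
    (∑ a ∈ s, g a).rank ≤ ∑ a ∈ s, (g a).rank := by
  classical
  induction s using Finset.induction_on with
  | empty => simp
  | @insert a s ha ih =>
    rw [Finset.sum_insert ha, Finset.sum_insert ha]
    exact (matrix_rank_add_le _ _).trans (Nat.add_le_add_left ih _)

lemma rank_le_of_mem_span {r : ℕ} (Ψ : Finset (Matrix (Fin m) (Fin n) ℂ))
    (hΨ : ∀ ψ ∈ Ψ, ψ.rank = 1) (hcard : Ψ.card ≤ r)
    {Z : Matrix (Fin m) (Fin n) ℂ}
    (hZ : Z ∈ Submodule.span ℂ (Ψ : Set (Matrix (Fin m) (Fin n) ℂ))) :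
    Z.rank ≤ r := by
  obtain ⟨f, -, hf⟩ := Submodule.mem_span_finset.mp hZ
  calc Z.rank = (∑ ψ ∈ Ψ, f ψ • ψ).rank := by rw [hf]
    _ ≤ ∑ ψ ∈ Ψ, (f ψ • ψ).rank := matrix_rank_sum_le _ _
    _ ≤ ∑ ψ ∈ Ψ, 1 :=
        Finset.sum_le_sum fun ψ hψ => (matrix_rank_smul_le _ _).trans (le_of_eq (hΨ ψ hψ))
    _ = Ψ.card := by simp
    _ ≤ r := hcard

end Aux2

section Cross
variable {m n p r : ℕ} {A : Matrix (Fin m) (Fin n) ℂ →ₗ[ℂ] (Fin p → ℂ)} {δ : ℝ}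

lemma re_cross (hA : RIPwith A r δ) {U V : Matrix (Fin m) (Fin n) ℂ}
    (horth : (frobInner U V).re = 0)
    (h1 : (U + V).rank ≤ r) (h2 : (U - V).rank ≤ r) :
    |(eInner (A U) (A V)).re| ≤ δ / 2 * (frobNorm U ^ 2 + frobNorm V ^ 2) := by
  obtain ⟨l1, u1⟩ := hA _ h1
  obtain ⟨l2, u2⟩ := hA _ h2
  have hS1 : frobNorm (U + V) ^ 2 = frobNorm U ^ 2 + frobNorm V ^ 2 := by
    rw [frobNorm_sq_expand, horth]; ring
  have hS2 : frobNorm (U - V) ^ 2 = frobNorm U ^ 2 + frobNorm V ^ 2 := by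
    rw [frobNorm_sq_expand_sub, horth]; ring
  have e1 : eNorm (A (U + V)) ^ 2
      = eNorm (A U) ^ 2 + eNorm (A V) ^ 2 + 2 * (eInner (A U) (A V)).re := by
    rw [map_add, eNorm_sq_expand]
  have e2 : eNorm (A (U - V)) ^ 2
      = eNorm (A U) ^ 2 + eNorm (A V) ^ 2 - 2 * (eInner (A U) (A V)).re := by
    rw [map_sub, eNorm_sq_expand_sub]
  rw [hS1] at l1 u1
  rw [hS2] at l2 u2
  rw [abs_le]
  constructor <;> linarith

lemma abs_cross (hδ0 : 0 ≤ δ) (hA : RIPwith A r δ) {U V : Matrix (Fin m) (Fin n) ℂ}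
    (horth : frobInner U V = 0)
    (h1 : (U + V).rank ≤ r) (h2 : (U - V).rank ≤ r)
    (h3 : (U + Complex.I • V).rank ≤ r) (h4 : (U - Complex.I • V).rank ≤ r) :
    ‖eInner (A U) (A V)‖
      ≤ Real.sqrt 2 * (δ / 2) * (frobNorm U ^ 2 + frobNorm V ^ 2) := by
  set S := frobNorm U ^ 2 + frobNorm V ^ 2 with hSdef
  have hS0 : 0 ≤ S := add_nonneg (sq_nonneg _) (sq_nonneg _)
  have hb : 0 ≤ δ / 2 * S := mul_nonneg (by linarith) hS0
  have hre : |(eInner (A U) (A V)).re| ≤ δ / 2 * S :=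
    re_cross hA (by rw [horth]; simp) h1 h2
  have horth' : (frobInner U (Complex.I • V)).re = 0 := by
    rw [frobInner_smul_right, horth, mul_zero]
    simp
  have hSI : frobNorm (Complex.I • V) = frobNorm V := by
    rw [frobNorm_smul, Complex.norm_I, one_mul]
  have him0 := re_cross hA horth' h3 h4
  rw [hSI] at him0
  have hre_im : (eInner (A U) (A (Complex.I • V))).re = (eInner (A U) (A V)).im := by
    rw [map_smul, eInner_smul_right]
    simp [Complex.conj_I, Complex.mul_re]
  rw [hre_im] at him0
  have habs : ‖eInner (A U) (A V)‖
      = Real.sqrt ((eInner (A U) (A V)).re ^ 2 + (eInner (A U) (A V)).im ^ 2) := by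
    rw [Complex.norm_def, Complex.normSq_apply]
    congr 1
    ring
  have hre2 : (eInner (A U) (A V)).re ^ 2 ≤ (δ / 2 * S) ^ 2 := by
    rw [← sq_abs]
    exact pow_le_pow_left₀ (abs_nonneg _) hre 2
  have him2 : (eInner (A U) (A V)).im ^ 2 ≤ (δ / 2 * S) ^ 2 := by
    rw [← sq_abs]
    exact pow_le_pow_left₀ (abs_nonneg _) him0 2
  calc ‖eInner (A U) (A V)‖
      ≤ Real.sqrt ((δ / 2 * S) ^ 2 + (δ / 2 * S) ^ 2) := by
        rw [habs]
        exact Real.sqrt_le_sqrt (by linarith)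
    _ = Real.sqrt 2 * (δ / 2 * S) := by
        rw [show (δ / 2 * S) ^ 2 + (δ / 2 * S) ^ 2 = 2 * (δ / 2 * S) ^ 2 by ring,
          Real.sqrt_mul (by norm_num : (0:ℝ) ≤ 2), Real.sqrt_sq hb]
    _ = Real.sqrt 2 * (δ / 2) * S := by ring

end Cross

set_option maxHeartbeats 1000000 in
/-- If `P_Υ^⊥` and `P_Ψ` commute, `P_Υ^⊥ X = 0` and `|Ψ| ≤ r`, then
`‖P_Υ^⊥ P_Ψ A* A P_Ψ X‖_F ≤ √2 δ_r(A) ‖P_Ψ X‖_F`. -/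
theorem rop_perp_proj {m n p r : ℕ}
    (A : Matrix (Fin m) (Fin n) ℂ →ₗ[ℂ] (Fin p → ℂ))
    (δ : ℝ) (hδ0 : 0 ≤ δ) (hA : RIPwith A r δ)
    (Astar : (Fin p → ℂ) →ₗ[ℂ] Matrix (Fin m) (Fin n) ℂ) (hadj : IsAdjoint A Astar)
    (Ψ Υ : Finset (Matrix (Fin m) (Fin n) ℂ))
    (hΨ : ∀ ψ ∈ Ψ, ψ.rank = 1) (hΥ : ∀ ψ ∈ Υ, ψ.rank = 1) (hcard : Ψ.card ≤ r)
    (PΨ PΥ : Matrix (Fin m) (Fin n) ℂ →ₗ[ℂ] Matrix (Fin m) (Fin n) ℂ)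
    (hPΨ : IsOrthProjOn PΨ (Ψ : Set (Matrix (Fin m) (Fin n) ℂ)))
    (hPΥ : IsOrthProjOn PΥ (Υ : Set (Matrix (Fin m) (Fin n) ℂ)))
    -- `P_Υ^⊥ P_Ψ = P_Ψ P_Υ^⊥`
    (hcomm : ∀ Z, PΨ Z - PΥ (PΨ Z) = PΨ (Z - PΥ Z))
    (X : Matrix (Fin m) (Fin n) ℂ)
    -- `P_Υ^⊥ X = 0`
    (hX : X - PΥ X = 0) :
    frobNorm (PΨ (Astar (A (PΨ X))) - PΥ (PΨ (Astar (A (PΨ X)))))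
      ≤ Real.sqrt 2 * δ * frobNorm (PΨ X) := by
  classical
  obtain ⟨hPΨi, hPΨr, hPΨs⟩ := hPΨ
  obtain ⟨hPΥi, hPΥr, hPΥs⟩ := hPΥ
  set V : Matrix (Fin m) (Fin n) ℂ := PΨ X with hV
  set Z₀ : Matrix (Fin m) (Fin n) ℂ := Astar (A V) with hZ₀
  set W : Matrix (Fin m) (Fin n) ℂ := PΨ Z₀ - PΥ (PΨ Z₀) with hW
  have hWPψ : W = PΨ (Z₀ - PΥ Z₀) := hcomm Z₀
  have hPΨW : PΨ W = W := by rw [hWPψ, hPΨi]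
  have hQW : W - PΥ W = W := by
    rw [hW, map_sub PΥ, hPΥi]
    abel
  have hQsa : ∀ Y Z : Matrix (Fin m) (Fin n) ℂ,
      frobInner (Y - PΥ Y) Z = frobInner Y (Z - PΥ Z) := by
    intro Y Z
    rw [frobInner_sub_left, frobInner_sub_right, hPΥs]
  have hself : frobInner W W = frobInner Z₀ W := by
    calc frobInner W W = frobInner (PΨ Z₀ - PΥ (PΨ Z₀)) W := by rw [← hW]
      _ = frobInner (PΨ Z₀) (W - PΥ W) := hQsa _ _
      _ = frobInner (PΨ Z₀) W := by rw [hQW]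
      _ = frobInner Z₀ (PΨ W) := hPΨs _ _
      _ = frobInner Z₀ W := by rw [hPΨW]
  have hWZ : frobInner W Z₀ = ((frobNorm W ^ 2 : ℝ) : ℂ) := by
    have h := frobInner_conj Z₀ W
    rw [h, ← hself, frobInner_self, Complex.conj_ofReal]
  have hinner : eInner (A W) (A V) = ((frobNorm W ^ 2 : ℝ) : ℂ) := by
    have h := hadj W (A V)
    rw [h, ← hZ₀, hWZ]
  have hQV : V - PΥ V = 0 := by
    rw [hV, hcomm X, hX, map_zero]
  have horth : frobInner W V = 0 := by
    calc frobInner W V = frobInner (PΨ Z₀ - PΥ (PΨ Z₀)) V := by rw [← hW]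
      _ = frobInner (PΨ Z₀) (V - PΥ V) := hQsa _ _
      _ = 0 := by rw [hQV, frobInner_zero_right]
  have hWmem : W ∈ Submodule.span ℂ (Ψ : Set (Matrix (Fin m) (Fin n) ℂ)) := by
    rw [← hPΨr]
    exact ⟨Z₀ - PΥ Z₀, hWPψ.symm⟩
  have hVmem : V ∈ Submodule.span ℂ (Ψ : Set (Matrix (Fin m) (Fin n) ℂ)) := by
    rw [← hPΨr]
    exact ⟨X, hV.symm⟩
  have hrhs0 : 0 ≤ Real.sqrt 2 * δ * frobNorm V :=
    mul_nonneg (mul_nonneg (Real.sqrt_nonneg 2) hδ0) (frobNorm_nonneg V)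
  by_cases hW0 : frobNorm W = 0
  · rw [hW0]; exact hrhs0
  by_cases hV0 : frobNorm V = 0
  · exfalso
    have hV0' : V = 0 := frobNorm_eq_zero hV0
    have hz : eInner (A W) (A V) = 0 := by
      rw [hV0', map_zero, eInner_zero_right]
    rw [hinner] at hz
    have : frobNorm W ^ 2 = 0 := by exact_mod_cast hz
    exact hW0 (by nlinarith [frobNorm_nonneg W])
  have hWpos : 0 < frobNorm W := lt_of_le_of_ne (frobNorm_nonneg W) (Ne.symm hW0)
  have hVpos : 0 < frobNorm V := lt_of_le_of_ne (frobNorm_nonneg V) (Ne.symm hV0)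
  set t : ℝ := Real.sqrt (frobNorm V / frobNorm W) with htdef
  have ht : 0 < t := Real.sqrt_pos.mpr (div_pos hVpos hWpos)
  have ht2 : t ^ 2 = frobNorm V / frobNorm W :=
    Real.sq_sqrt (le_of_lt (div_pos hVpos hWpos))
  set U' : Matrix (Fin m) (Fin n) ℂ := ((t : ℝ) : ℂ) • W with hU'
  set V' : Matrix (Fin m) (Fin n) ℂ := ((t⁻¹ : ℝ) : ℂ) • V with hV'
  have hU'mem : U' ∈ Submodule.span ℂ (Ψ : Set (Matrix (Fin m) (Fin n) ℂ)) :=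
    Submodule.smul_mem _ _ hWmem
  have hV'mem : V' ∈ Submodule.span ℂ (Ψ : Set (Matrix (Fin m) (Fin n) ℂ)) :=
    Submodule.smul_mem _ _ hVmem
  have h1 := rank_le_of_mem_span Ψ hΨ hcard (Submodule.add_mem _ hU'mem hV'mem)
  have h2 := rank_le_of_mem_span Ψ hΨ hcard (Submodule.sub_mem _ hU'mem hV'mem)
  have h3 := rank_le_of_mem_span Ψ hΨ hcard
    (Submodule.add_mem _ hU'mem (Submodule.smul_mem _ Complex.I hV'mem))
  have h4 := rank_le_of_mem_span Ψ hΨ hcard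
    (Submodule.sub_mem _ hU'mem (Submodule.smul_mem _ Complex.I hV'mem))
  have horth' : frobInner U' V' = 0 := by
    rw [hU', hV', frobInner_smul_left, frobInner_smul_right, horth]
    ring
  have key := abs_cross hδ0 hA horth' h1 h2 h3 h4
  have hcancel : ((t : ℝ) : ℂ) * ((t⁻¹ : ℝ) : ℂ) = 1 := by
    rw [← Complex.ofReal_mul, mul_inv_cancel₀ (ne_of_gt ht), Complex.ofReal_one]
  have hinner' : eInner (A U') (A V') = eInner (A W) (A V) := by
    rw [hU', hV', map_smul, map_smul, eInner_smul_left, eInner_smul_right,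
      Complex.conj_ofReal, ← mul_assoc, hcancel, one_mul]
  have hU'n : frobNorm U' ^ 2 = frobNorm V * frobNorm W := by
    rw [hU', frobNorm_smul, Complex.norm_real, Real.norm_eq_abs, abs_of_pos ht,
      mul_pow, ht2]
    field_simp
  have hV'n : frobNorm V' ^ 2 = frobNorm W * frobNorm V := by
    rw [hV', frobNorm_smul, Complex.norm_real, Real.norm_eq_abs,
      abs_of_pos (inv_pos.mpr ht), mul_pow, inv_pow, ht2]
    field_simp
  rw [hinner', hinner, Complex.norm_real, Real.norm_eq_abs, abs_of_nonneg (sq_nonneg _), hU'n, hV'n] at key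
  nlinarith [key, hWpos, Real.sqrt_nonneg 2]
end
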